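/- Define h(u) = u·(ψ(n+s+1) − ψ((n+s)u+1)) for u ∈ [0,1], where ψ is the digamma function and n+s > 0 is fixed. Then h is strictly concave on (0,1), i.e., h''(u) < 0 for u ∈ (0,1). -/

import Mathlib

open Real Filter Topology Set Finset

/-! Auxiliary development: series representation of the digamma function and its
derivatives, built from the Bohr–Mollerup limit formula for `log Γ`. -/

section DigammaAux

lemma sum_sq_aux : Summable (fun k : ℕ => 1/((k:ℝ)+1)^2) := by
  have := (summable_nat_add_iff 1).mpr (Real.summable_one_div_nat_pow.mpr (by norm_num : 1 < 2))
  simpa [add_comm] using this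

lemma sum_cube_aux : Summable (fun k : ℕ => 1/((k:ℝ)+1)^3) := by
  have := (summable_nat_add_iff 1).mpr (Real.summable_one_div_nat_pow.mpr (by norm_num : 1 < 3))
  simpa [add_comm] using this

lemma cast_le_shift {x : ℝ} (hx : 0 ≤ x) (k : ℕ) : ((k:ℝ)+1) ≤ x+((k:ℝ)+1) := by linarith

lemma summable_one_div_sq_shift {x : ℝ} (hx : 0 < x) :
    Summable (fun k : ℕ => 1/(x+((k:ℝ)+1))^2) := by
  refine sum_sq_aux.of_nonneg_of_le (fun k => by positivity) (fun k => ?_)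
  have h1 : ((k:ℝ)+1)^2 ≤ (x+((k:ℝ)+1))^2 :=
    pow_le_pow_left₀ (by positivity) (cast_le_shift hx.le k) 2
  exact div_le_div_of_nonneg_left one_pos.le (by positivity) h1 |>.trans_eq rfl

lemma summable_one_div_cube_shift {x : ℝ} (hx : 0 < x) :
    Summable (fun k : ℕ => 1/(x+((k:ℝ)+1))^3) := by
  refine sum_cube_aux.of_nonneg_of_le (fun k => by positivity) (fun k => ?_)
  have h1 : ((k:ℝ)+1)^3 ≤ (x+((k:ℝ)+1))^3 :=
    pow_le_pow_left₀ (by positivity) (cast_le_shift hx.le k) 3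
  exact div_le_div_of_nonneg_left one_pos.le (by positivity) h1

lemma summable_cube_shift {x : ℝ} (hx : 0 < x) :
    Summable (fun k : ℕ => -2/(x+((k:ℝ)+1))^3) := by
  have := ((summable_one_div_cube_shift hx).mul_left (-2))
  refine this.congr (fun k => by rw [div_eq_mul_inv, div_eq_mul_inv]; ring)

lemma summable_dterm {x : ℝ} (hx : 0 < x) :
    Summable (fun k : ℕ => 1/((k:ℝ)+1) - 1/(x+((k:ℝ)+1))) := by
  refine (sum_sq_aux.mul_left x).of_nonneg_of_le (fun k => ?_) (fun k => ?_)
  · have h1 : 1/(x+((k:ℝ)+1)) ≤ 1/((k:ℝ)+1) :=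
      div_le_div_of_nonneg_left one_pos.le (by positivity) (cast_le_shift hx.le k)
    linarith
  · have hk : (0:ℝ) < (k:ℝ)+1 := by positivity
    have hxk : (0:ℝ) < x+((k:ℝ)+1) := by positivity
    have e : 1/((k:ℝ)+1) - 1/(x+((k:ℝ)+1)) = x/(((k:ℝ)+1)*(x+((k:ℝ)+1))) := by
      field_simp
      ring
    rw [e, sq, mul_one_div]
    have h2 : ((k:ℝ)+1)*((k:ℝ)+1) ≤ ((k:ℝ)+1)*(x+((k:ℝ)+1)) :=
      mul_le_mul_of_nonneg_left (cast_le_shift hx.le k) (by positivity)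
    exact div_le_div_of_nonneg_left hx.le (by positivity) h2

/-- The digamma function via its Gauss series. -/
noncomputable def psi0 (x : ℝ) : ℝ :=
  (-Real.eulerMascheroniConstant + -(1/x)) + ∑' k : ℕ, (1/((k:ℝ)+1) - 1/(x+((k:ℝ)+1)))

/-- The trigamma function. -/
noncomputable def psi1 (x : ℝ) : ℝ :=
  1/x^2 + ∑' k : ℕ, 1/(x+((k:ℝ)+1))^2

/-- The tetragamma function. -/
noncomputable def psi2 (x : ℝ) : ℝ :=
  -2/x^3 + ∑' k : ℕ, -2/(x+((k:ℝ)+1))^3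

lemma hasDerivAt_term {x : ℝ} (hx : 0 < x) (k : ℕ) :
    HasDerivAt (fun y => 1/((k:ℝ)+1) - 1/(y+((k:ℝ)+1))) (1/(x+((k:ℝ)+1))^2) x := by
  have hne : x+((k:ℝ)+1) ≠ 0 := by positivity
  have h2 : HasDerivAt (fun y : ℝ => (y+((k:ℝ)+1))⁻¹) (-1/(x+((k:ℝ)+1))^2) x :=
    ((hasDerivAt_id x).add_const _).inv hne
  have h3 := h2.const_sub (1/((k:ℝ)+1))
  simpa [one_div, neg_div] using h3

lemma hasDerivAt_term' {x : ℝ} (hx : 0 < x) (k : ℕ) :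
    HasDerivAt (fun y => 1/(y+((k:ℝ)+1))^2) (-2/(x+((k:ℝ)+1))^3) x := by
  have hne : x+((k:ℝ)+1) ≠ 0 := by positivity
  have h1 : HasDerivAt (fun y : ℝ => (y+((k:ℝ)+1))^2) (2*(x+((k:ℝ)+1))) x := by
    simpa using (((hasDerivAt_id x).add_const ((k:ℝ)+1)).fun_pow 2)
  have h2 := h1.fun_inv (by positivity)
  simp only [one_div]
  refine h2.congr_deriv ?_
  field_simp

lemma hasDerivAt_tsum_psi0 {x : ℝ} (hx : 0 < x) :
    HasDerivAt (fun y => ∑' k : ℕ, (1/((k:ℝ)+1) - 1/(y+((k:ℝ)+1))))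
      (∑' k : ℕ, 1/(x+((k:ℝ)+1))^2) x := by
  refine hasDerivAt_tsum_of_isPreconnected sum_sq_aux isOpen_Ioi
    (isPreconnected_Ioi) (fun k y hy => hasDerivAt_term hy k) (fun k y hy => ?_)
    (Set.mem_Ioi.mpr one_pos) (summable_dterm one_pos) (Set.mem_Ioi.mpr hx)
  have hy' : (0:ℝ) < y := hy
  rw [Real.norm_eq_abs, abs_of_nonneg (by positivity)]
  exact div_le_div_of_nonneg_left one_pos.le (by positivity)
    (pow_le_pow_left₀ (by positivity) (cast_le_shift hy'.le k) 2)

lemma hasDerivAt_tsum_psi1 {x : ℝ} (hx : 0 < x) :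
    HasDerivAt (fun y => ∑' k : ℕ, 1/(y+((k:ℝ)+1))^2)
      (∑' k : ℕ, -2/(x+((k:ℝ)+1))^3) x := by
  refine hasDerivAt_tsum_of_isPreconnected (sum_cube_aux.mul_left 2) isOpen_Ioi
    (isPreconnected_Ioi) (fun k y hy => hasDerivAt_term' hy k) (fun k y hy => ?_)
    (Set.mem_Ioi.mpr one_pos) (summable_one_div_sq_shift one_pos) (Set.mem_Ioi.mpr hx)
  have hy' : (0:ℝ) < y := hy
  rw [Real.norm_eq_abs, abs_div, abs_of_nonpos (by norm_num : (-2:ℝ) ≤ 0),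
    abs_of_nonneg (by positivity : (0:ℝ) ≤ (y+((k:ℝ)+1))^3)]
  rw [mul_one_div]
  norm_num
  exact div_le_div_of_nonneg_left (by norm_num) (by positivity)
    (pow_le_pow_left₀ (by positivity) (cast_le_shift hy'.le k) 3)

lemma hasDerivAt_psi0 {x : ℝ} (hx : 0 < x) : HasDerivAt psi0 (psi1 x) x := by
  have h1 : HasDerivAt (fun y : ℝ => -Real.eulerMascheroniConstant + -(1/y))
      (1/x^2) x := by
    have := (hasDerivAt_inv hx.ne').neg.const_add (-Real.eulerMascheroniConstant)
    simpa [one_div] using this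
  exact (h1.add (hasDerivAt_tsum_psi0 hx))

lemma hasDerivAt_psi1 {x : ℝ} (hx : 0 < x) : HasDerivAt psi1 (psi2 x) x := by
  have h1 : HasDerivAt (fun y : ℝ => 1/y^2) (-2/x^3) x := by
    have hp : HasDerivAt (fun y : ℝ => y^2) (2*x) x := by simpa using (hasDerivAt_id x).fun_pow 2
    have := hp.fun_inv (by positivity)
    simp only [one_div]
    refine this.congr_deriv ?_
    field_simp
  exact h1.add (hasDerivAt_tsum_psi1 hx)

lemma key_ineq {y : ℝ} (hy : 0 < y) : 0 < 2 * psi1 y + (y - 1) * psi2 y := by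
  have hsq := summable_one_div_sq_shift hy
  have hcube := summable_cube_shift hy
  have e : 2 * psi1 y + (y - 1) * psi2 y
      = (2/y^3) + ∑' k : ℕ, (2 * (1/(y+((k:ℝ)+1))^2) + (y-1) * (-2/(y+((k:ℝ)+1))^3)) := by
    rw [Summable.tsum_add (hsq.mul_left 2) (hcube.mul_left (y-1)), psi1, psi2]
    rw [tsum_mul_left, tsum_mul_left]
    field_simp
    ring
  rw [e]
  have h2 : 0 ≤ ∑' k : ℕ, (2 * (1/(y+((k:ℝ)+1))^2) + (y-1) * (-2/(y+((k:ℝ)+1))^3)) := by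
    refine tsum_nonneg (fun k => ?_)
    have hyk : (0:ℝ) < y+((k:ℝ)+1) := by positivity
    have he : 2 * (1/(y+((k:ℝ)+1))^2) + (y-1) * (-2/(y+((k:ℝ)+1))^3)
        = 2*((k:ℝ)+2)/(y+((k:ℝ)+1))^3 := by
      field_simp
      ring
    rw [he]
    positivity
  have h3 : (0:ℝ) < 2/y^3 := by positivity
  linarith

/-- derivative of the log-Gamma sequence -/
lemma hasDerivAt_logGammaSeq {x : ℝ} (hx : 0 < x) (n : ℕ) :
    HasDerivAt (fun y => Real.BohrMollerup.logGammaSeq y n)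
      (((Real.log n - (harmonic n : ℝ)) + -(1/x))
        + ∑ k ∈ Finset.range n, (1/((k:ℝ)+1) - 1/(x+((k:ℝ)+1)))) x := by
  have hderiv : HasDerivAt (fun y => Real.BohrMollerup.logGammaSeq y n)
      (Real.log n - ∑ m ∈ Finset.range (n+1), 1/(x+(m:ℝ))) x := by
    unfold Real.BohrMollerup.logGammaSeq
    have h1 : HasDerivAt (fun y : ℝ => y * Real.log n + Real.log (Nat.factorial n))
        (Real.log n) x := by
      simpa using ((hasDerivAt_id x).mul_const (Real.log n)).add_const (Real.log (Nat.factorial n))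
    have h2 : HasDerivAt (fun y : ℝ => ∑ m ∈ Finset.range (n+1), Real.log (y+(m:ℝ)))
        (∑ m ∈ Finset.range (n+1), 1/(x+(m:ℝ))) x := by
      refine HasDerivAt.fun_sum (fun m _ => ?_)
      have hpos : 0 < x + (m:ℝ) := by positivity
      have := (((hasDerivAt_id x).add_const (m:ℝ)).log hpos.ne')
      simpa [one_div] using this
    exact h1.sub h2
  convert hderiv using 1
  have hsplit : ∑ m ∈ Finset.range (n+1), 1/(x+(m:ℝ))
      = 1/x + ∑ k ∈ Finset.range n, 1/(x+((k:ℝ)+1)) := by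
    rw [Finset.sum_range_succ']
    push_cast
    simp [add_comm]
  have hharm : (harmonic n : ℝ) = ∑ k ∈ Finset.range n, 1/((k:ℝ)+1) := by
    rw [harmonic]
    push_cast
    simp [one_div]
  rw [hsplit, hharm, Finset.sum_sub_distrib]
  ring

lemma hasDerivAt_logGamma {x : ℝ} (hx : 0 < x) :
    HasDerivAt (fun y => Real.log (Real.Gamma y)) (psi0 x) x := by
  set s : Set ℝ := Set.Ioo (x/2) (x+1) with hs
  have hxs : x ∈ s := Set.mem_Ioo.mpr ⟨by linarith, by linarith⟩
  have hopen : IsOpen s := isOpen_Ioo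
  have hunif : TendstoUniformlyOn
      (fun (n:ℕ) (y:ℝ) => ((Real.log n - (harmonic n : ℝ)) + -(1/y))
        + ∑ k ∈ Finset.range n, (1/((k:ℝ)+1) - 1/(y+((k:ℝ)+1))))
      (fun y => (-Real.eulerMascheroniConstant + -(1/y))
        + ∑' k : ℕ, (1/((k:ℝ)+1) - 1/(y+((k:ℝ)+1)))) atTop s := by
    refine TendstoUniformlyOn.add (TendstoUniformlyOn.add ?_ ?_) ?_
    · have : Tendsto (fun n : ℕ => Real.log n - (harmonic n : ℝ)) atTop
          (𝓝 (-Real.eulerMascheroniConstant)) := by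
        have := Real.tendsto_harmonic_sub_log
        simpa using this.neg.congr (fun n => by ring)
      exact this.tendstoUniformlyOn_const s
    · rw [Metric.tendstoUniformlyOn_iff]
      intro ε hε
      exact Eventually.of_forall (fun n y _ => by simpa using hε)
    · refine tendstoUniformlyOn_tsum_nat (u := fun k => (x+1)/((k:ℝ)+1)^2)
        (sum_sq_aux.mul_left (x+1)|>.congr (fun k => by rw [mul_one_div])) ?_
      intro k y hy
      obtain ⟨hy1, hy2⟩ := hy
      have hy0 : 0 < y := lt_trans (by linarith) hy1
      have hk : (0:ℝ) < (k:ℝ)+1 := by positivity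
      have hyk : (0:ℝ) < y+((k:ℝ)+1) := by linarith
      have e : 1/((k:ℝ)+1) - 1/(y+((k:ℝ)+1)) = y/(((k:ℝ)+1)*(y+((k:ℝ)+1))) := by
        field_simp
        ring
      rw [Real.norm_eq_abs, e, abs_of_nonneg (by positivity)]
      rw [div_le_div_iff₀ (by positivity) (by positivity)]
      have hb : ((k:ℝ)+1)^2 ≤ ((k:ℝ)+1)*(y+((k:ℝ)+1)) := by nlinarith
      calc y*(((k:ℝ)+1)^2) ≤ (x+1)*(((k:ℝ)+1)^2) := by nlinarith
        _ ≤ (x+1)*(((k:ℝ)+1)*(y+((k:ℝ)+1))) := by nlinarith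
  have hpos : ∀ y ∈ s, (0:ℝ) < y := fun y hy => lt_trans (by linarith) hy.1
  refine hasDerivAt_of_tendstoUniformlyOn hopen hunif
    (Eventually.of_forall (fun n y hy => hasDerivAt_logGammaSeq (hpos y hy) n))
    (fun y hy => Real.BohrMollerup.tendsto_log_gamma (hpos y hy)) hxs

end DigammaAux

/-- The digamma function `ψ = (log ∘ Γ)'`. -/
noncomputable def digamma (x : ℝ) : ℝ := deriv (fun y => Real.log (Real.Gamma y)) x

lemma digamma_eq_psi0 {x : ℝ} (hx : 0 < x) : digamma x = psi0 x :=
  (hasDerivAt_logGamma hx).deriv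

/-- The expected-entropy summand
`h(u) = u (ψ(n+s+1) − ψ((n+s)u+1))` is strictly concave on `(0,1)`,
i.e. `h''(u) < 0` there. -/
theorem idm_entropy_summand_strictly_concave
    (n s : ℝ) (hns : 0 < n + s)
    (h : ℝ → ℝ)
    (hh : h = fun u => u * (digamma (n + s + 1) - digamma ((n + s) * u + 1))) :
    StrictConcaveOn ℝ (Set.Ioo (0:ℝ) 1) h ∧
      ∀ u ∈ Set.Ioo (0:ℝ) 1, iteratedDeriv 2 h u < 0 := by
  set c : ℝ := n + s with hc
  set A : ℝ := digamma (c + 1) with hA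
  -- first derivative
  have h1 : ∀ u ∈ Set.Ioo (0:ℝ) 1,
      HasDerivAt h (A - psi0 (c*u+1) - u*(c*psi1 (c*u+1))) u := by
    intro u hu
    have hcu : 0 < c*u+1 := by nlinarith [hu.1]
    have hinner : HasDerivAt (fun v : ℝ => c*v+1) c u := by
      simpa using ((hasDerivAt_id u).const_mul c).add_const 1
    have hpsi : HasDerivAt (fun v : ℝ => psi0 (c*v+1)) (psi1 (c*u+1) * c) u :=
      ((hasDerivAt_psi0 hcu).comp u hinner :)
    have hH : HasDerivAt (fun v : ℝ => v * (A - psi0 (c*v+1)))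
        (1 * (A - psi0 (c*u+1)) + u * -(psi1 (c*u+1) * c)) u :=
      (hasDerivAt_id u).mul (hpsi.const_sub A)
    have heq : h =ᶠ[𝓝 u] (fun v : ℝ => v * (A - psi0 (c*v+1))) := by
      filter_upwards [isOpen_Ioo.mem_nhds hu] with v hv
      have hcv : 0 < c*v+1 := by nlinarith [hv.1]
      rw [hh]
      simp only []
      rw [digamma_eq_psi0 hcv]
    have := hH.congr_of_eventuallyEq heq
    refine this.congr_deriv ?_
    ring
  -- second derivative
  have h2 : ∀ u ∈ Set.Ioo (0:ℝ) 1,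
      HasDerivAt (deriv h) (-(2*c*psi1 (c*u+1)) - u*(c^2*psi2 (c*u+1))) u := by
    intro u hu
    have hcu : 0 < c*u+1 := by nlinarith [hu.1]
    have hinner : HasDerivAt (fun v : ℝ => c*v+1) c u := by
      simpa using ((hasDerivAt_id u).const_mul c).add_const 1
    have hpsi : HasDerivAt (fun v : ℝ => psi0 (c*v+1)) (psi1 (c*u+1) * c) u :=
      ((hasDerivAt_psi0 hcu).comp u hinner :)
    have hpsi' : HasDerivAt (fun v : ℝ => psi1 (c*v+1)) (psi2 (c*u+1) * c) u :=
      ((hasDerivAt_psi1 hcu).comp u hinner :)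
    have hH' : HasDerivAt (fun v : ℝ => A - psi0 (c*v+1) - v*(c*psi1 (c*v+1)))
        (-(psi1 (c*u+1) * c) - (1*(c*psi1 (c*u+1)) + u*(c*(psi2 (c*u+1) * c)))) u :=
      (hpsi.const_sub A).sub ((hasDerivAt_id u).mul (hpsi'.const_mul c))
    have heq : deriv h =ᶠ[𝓝 u] (fun v : ℝ => A - psi0 (c*v+1) - v*(c*psi1 (c*v+1))) := by
      filter_upwards [isOpen_Ioo.mem_nhds hu] with v hv
      exact (h1 v hv).deriv
    have := hH'.congr_of_eventuallyEq heq
    refine this.congr_deriv ?_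
    ring
  -- the second derivative is negative
  have hneg : ∀ u ∈ Set.Ioo (0:ℝ) 1, deriv (deriv h) u < 0 := by
    intro u hu
    have hcu : 0 < c*u+1 := by nlinarith [hu.1]
    rw [(h2 u hu).deriv]
    have hk := key_ineq hcu
    have he : -(2*c*psi1 (c*u+1)) - u*(c^2*psi2 (c*u+1))
        = -(c*(2*psi1 (c*u+1) + (c*u+1-1)*psi2 (c*u+1))) := by ring
    rw [he]
    have : 0 < c*(2*psi1 (c*u+1) + (c*u+1-1)*psi2 (c*u+1)) := by
      apply mul_pos hns
      simpa using hk
    linarith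
  have hit : ∀ u ∈ Set.Ioo (0:ℝ) 1, iteratedDeriv 2 h u < 0 := by
    intro u hu
    have : iteratedDeriv 2 h u = deriv (deriv h) u := by
      rw [iteratedDeriv_succ, iteratedDeriv_one]
    rw [this]
    exact hneg u hu
  constructor
  · refine strictConcaveOn_of_deriv2_neg (convex_Ioo 0 1) ?_ ?_
    · exact fun u hu => (h1 u hu).differentiableAt.continuousAt.continuousWithinAt
    · intro u hu
      rw [interior_Ioo] at hu
      have : (deriv^[2] h) u = deriv (deriv h) u := by
        simp [Function.iterate_succ, Function.iterate_one]
      rw [this]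
      exact hneg u hu
  · exact hit
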